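/- For the complete multipartite graph K_{1,2,...,2} on n = 2r-1 vertices, the maximum vertex transmission D_max equals n, and D_max − λ₁ = (n+1−√((n-1)(n+3)))/2, where λ₁ is the distance spectral radius. -/

import Mathlib

open SimpleGraph Matrix Finset BigOperators

/-- The distance matrix of a graph on `Fin n`, with real entries `d(u,v)`. -/
noncomputable def distMatrix {n : ℕ} (G : SimpleGraph (Fin n)) : Matrix (Fin n) (Fin n) ℝ :=
  fun u v => (G.dist u v : ℝ)

lemma distMatrix_isHermitian {n : ℕ} (G : SimpleGraph (Fin n)) :
    (distMatrix G).IsHermitian := by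
  unfold Matrix.IsHermitian
  ext u v
  simp [distMatrix, Matrix.conjTranspose_apply, SimpleGraph.dist_comm]

/-- The distance spectral radius: the largest eigenvalue of the distance matrix. -/
noncomputable def lambda1 {n : ℕ} (G : SimpleGraph (Fin n)) : ℝ :=
  ⨆ i, (distMatrix_isHermitian G).eigenvalues i

/-- The transmission of a vertex: the sum of distances to all other vertices. -/
noncomputable def transmission {n : ℕ} (G : SimpleGraph (Fin n)) (v : Fin n) : ℕ :=
  ∑ u, G.dist v u

/-- The maximum transmission. -/
noncomputable def Dmax {n : ℕ} (G : SimpleGraph (Fin n)) : ℕ :=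
  Finset.univ.sup (transmission G)

/-- The minimum transmission. -/
noncomputable def Dmin {n : ℕ} (G : SimpleGraph (Fin n)) : ℕ :=
  sInf (Set.range (transmission G))

/-- The Wiener index: half the sum of all transmissions. -/
noncomputable def wiener {n : ℕ} (G : SimpleGraph (Fin n)) : ℝ :=
  (∑ v, (transmission G v : ℝ)) / 2

/-- The complete multipartite graph `K_{1,2,…,2}` on `n = 2r-1` vertices:
vertex `0` forms the part of size 1, and `{2i-1, 2i}` are the parts of size 2. -/
def K122 (n : ℕ) : SimpleGraph (Fin n) where
  Adj u v := u ≠ v ∧ ¬(u.val ≠ 0 ∧ v.val ≠ 0 ∧ (u.val + 1) / 2 = (v.val + 1) / 2)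
  symm := by
    constructor
    intro u v h
    exact ⟨h.1.symm, fun hc => h.2 ⟨hc.2.1, hc.1, hc.2.2.symm⟩⟩
  loopless := by
    constructor
    intro u h
    exact h.1 rfl

lemma K122_adj {n : ℕ} {u v : Fin n} :
    (K122 n).Adj u v ↔ u ≠ v ∧ ¬(u.val ≠ 0 ∧ v.val ≠ 0 ∧ (u.val + 1) / 2 = (v.val + 1) / 2) :=
  Iff.rfl

lemma K122_adj_zero {n : ℕ} (hn : 0 < n) {v : Fin n} (hv : v.val ≠ 0) :
    (K122 n).Adj ⟨0, hn⟩ v := by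
  exact ⟨fun h => hv (by rw [← h]), by simp⟩

lemma K122_dist {n : ℕ} (hn : 0 < n) (u v : Fin n) :
    (K122 n).dist u v =
      if u = v then 0 else
      if u.val ≠ 0 ∧ v.val ≠ 0 ∧ (u.val + 1) / 2 = (v.val + 1) / 2 then 2 else 1 := by
  rcases eq_or_ne u v with rfl | huv
  · simp [SimpleGraph.dist_self]
  · rw [if_neg huv]
    by_cases hp : u.val ≠ 0 ∧ v.val ≠ 0 ∧ (u.val + 1) / 2 = (v.val + 1) / 2
    · rw [if_pos hp]
      have hnadj : ¬ (K122 n).Adj u v := fun h => h.2 hp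
      have hu0 : u.val ≠ 0 := hp.1
      have hv0 : v.val ≠ 0 := hp.2.1
      have hle : (K122 n).dist u v ≤ 2 := by
        simpa using SimpleGraph.dist_le
          (((K122 n).adj_symm (K122_adj_zero hn hu0)).toWalk.append
            (K122_adj_zero hn hv0).toWalk)
      have h1 : (K122 n).dist u v ≠ 1 := fun h =>
        hnadj (SimpleGraph.dist_eq_one_iff_adj.mp h)
      have h0 : (K122 n).dist u v ≠ 0 := by
        intro h
        rcases SimpleGraph.dist_eq_zero_iff_eq_or_not_reachable.mp h with h' | h'
        · exact huv h'
        · exact h' ⟨((K122 n).adj_symm (K122_adj_zero hn hu0)).toWalk.append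
            (K122_adj_zero hn hv0).toWalk⟩
      omega
    · rw [if_neg hp]
      rw [SimpleGraph.dist_eq_one_iff_adj]
      exact ⟨huv, hp⟩


/-- the pair partner: `0 ↦ 0`, `2k-1 ↦ 2k`, `2k ↦ 2k-1`. -/
def ksigma {n : ℕ} (u : Fin n) : Fin n :=
  if u.val = 0 then u else
  ⟨(if u.val % 2 = 1 then u.val + 1 else u.val - 1) % n,
    Nat.mod_lt _ (Nat.lt_of_le_of_lt (Nat.zero_le _) u.isLt)⟩

lemma ksigma_val {n : ℕ} (hodd : n % 2 = 1) (u : Fin n) :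
    (ksigma u).val = if u.val = 0 then 0 else
      if u.val % 2 = 1 then u.val + 1 else u.val - 1 := by
  have h := u.isLt
  unfold ksigma
  by_cases h0 : u.val = 0
  · simp [h0]
  · rw [if_neg h0, if_neg h0]
    show (if u.val % 2 = 1 then u.val + 1 else u.val - 1) % n = _
    split_ifs with hpar <;> exact Nat.mod_eq_of_lt (by omega)

lemma ksigma_invol {n : ℕ} (hodd : n % 2 = 1) (u : Fin n) : ksigma (ksigma u) = u := by
  have h := u.isLt
  have h' := (ksigma u).isLt
  have h1 := ksigma_val hodd u
  have h2 := ksigma_val hodd (ksigma u)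
  apply Fin.ext
  split_ifs at h1 h2 <;> omega

lemma ksigma_zero_iff {n : ℕ} (hodd : n % 2 = 1) (u : Fin n) :
    (ksigma u).val = 0 ↔ u.val = 0 := by
  have h := u.isLt
  have h1 := ksigma_val hodd u
  split_ifs at h1 <;> omega

lemma ksigma_ne {n : ℕ} (hodd : n % 2 = 1) {u : Fin n} (h0 : u.val ≠ 0) :
    ksigma u ≠ u := by
  have h := u.isLt
  have h1 := ksigma_val hodd u
  intro hc
  rw [hc, if_neg h0] at h1
  split_ifs at h1 <;> omega

lemma pair_iff {n : ℕ} (hodd : n % 2 = 1) {u v : Fin n} (hu : u.val ≠ 0) :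
    (v.val ≠ 0 ∧ (u.val + 1) / 2 = (v.val + 1) / 2 ∧ u ≠ v) ↔ v = ksigma u := by
  have hun := u.isLt
  have hvn := v.isLt
  have h1 := ksigma_val hodd u
  rw [if_neg hu] at h1
  have hne : (u ≠ v) ↔ u.val ≠ v.val := by
    constructor
    · intro hx hc; exact hx (Fin.ext hc)
    · intro hx hc; exact hx (congrArg Fin.val hc)
  have heq : (v = ksigma u) ↔ v.val = (ksigma u).val := by
    constructor
    · intro hx; exact congrArg Fin.val hx
    · intro hx; exact Fin.ext hx
  rw [hne, heq]
  split_ifs at h1 <;> omega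

lemma K122_dist_decomp {n : ℕ} (hodd : n % 2 = 1) (hn : 0 < n) {v : Fin n} (u : Fin n)
    (hv : v.val ≠ 0) :
    (K122 n).dist v u = (if v = u then 0 else 1) + (if u = ksigma v then 1 else 0) := by
  rw [K122_dist hn]
  by_cases hs : u = ksigma v
  · have hpair := (pair_iff hodd hv).mpr hs
    have hvu : v ≠ u := by
      intro hc; rw [← hc] at hs; exact ksigma_ne hodd hv hs.symm
    rw [if_neg hvu, if_pos ⟨hv, hpair.1, hpair.2.1⟩, if_neg hvu, if_pos hs]
  · rcases eq_or_ne v u with rfl | hvu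
    · simp [hs]
    · rw [if_neg hvu, if_neg hvu, if_neg hs]
      rw [if_neg]
      intro hc
      exact hs ((pair_iff hodd hv).mp ⟨hc.2.1, hc.2.2, hvu⟩)

lemma sum_ite_ne {n : ℕ} (v : Fin n) : ∑ u : Fin n, (if v = u then 0 else 1) = n - 1 := by
  rw [← Finset.add_sum_erase _ _ (Finset.mem_univ v), if_pos rfl, zero_add]
  rw [Finset.sum_congr rfl (fun u hu => if_neg (fun hc =>
    (Finset.mem_erase.mp hu).1 hc.symm))]
  simp [Finset.card_erase_of_mem]

lemma transmission_K122_ne {n : ℕ} (hodd : n % 2 = 1) (hn : 0 < n) {v : Fin n}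
    (hv : v.val ≠ 0) : transmission (K122 n) v = n := by
  unfold transmission
  rw [Finset.sum_congr rfl (fun u _ => K122_dist_decomp hodd hn u hv),
    Finset.sum_add_distrib, sum_ite_ne]
  have h2 : ∑ u : Fin n, (if u = ksigma v then 1 else 0) = 1 := by
    simp [Finset.sum_ite_eq']
  rw [h2]
  omega

lemma transmission_K122_zero {n : ℕ} (hn : 0 < n) {v : Fin n}
    (hv : v.val = 0) : transmission (K122 n) v = n - 1 := by
  unfold transmission
  rw [Finset.sum_congr rfl (fun u _ => ?_), sum_ite_ne v]
  rw [K122_dist hn]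
  rcases eq_or_ne v u with rfl | h
  · simp
  · rw [if_neg h, if_neg h, if_neg (fun hc => hc.1 hv)]

lemma Dmax_K122 {n : ℕ} (hodd : n % 2 = 1) (h3 : 3 ≤ n) : Dmax (K122 n) = n := by
  have hn : 0 < n := by omega
  apply le_antisymm
  · apply Finset.sup_le
    intro v _
    by_cases hv : v.val = 0
    · rw [transmission_K122_zero hn hv]; omega
    · rw [transmission_K122_ne hodd hn hv]
  · have h1 : transmission (K122 n) ⟨1, by omega⟩ = n :=
      transmission_K122_ne hodd hn (by simp)
    calc n = transmission (K122 n) ⟨1, by omega⟩ := h1.symm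
    _ ≤ _ := Finset.le_sup (Finset.mem_univ _)

variable {n : ℕ} (A : Matrix (Fin n) (Fin n) ℝ) (hA : A.IsHermitian)

lemma dot_self_basis (i : Fin n) :
    (⇑(hA.eigenvectorBasis i) : Fin n → ℝ) ⬝ᵥ ⇑(hA.eigenvectorBasis i) = 1 := by
  have hnorm : ‖hA.eigenvectorBasis i‖ = 1 := hA.eigenvectorBasis.orthonormal.1 i
  have h2 : (‖hA.eigenvectorBasis i‖ : ℝ)^2 = 1 := by rw [hnorm]; norm_num
  rw [EuclideanSpace.norm_eq] at h2
  rw [Real.sq_sqrt (by positivity)] at h2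
  simpa [dotProduct, pow_two] using h2

lemma eig_le_of_qform (c : ℝ)
    (hq : ∀ x : Fin n → ℝ, x ⬝ᵥ (A *ᵥ x) ≤ c * (x ⬝ᵥ x)) (i : Fin n) :
    hA.eigenvalues i ≤ c := by
  have hv := hA.mulVec_eigenvectorBasis i
  have hq' := hq (⇑(hA.eigenvectorBasis i))
  rw [hv] at hq'
  rw [dotProduct_smul, dot_self_basis A hA i] at hq'
  simpa using hq'

lemma qform_le_sup [Nonempty (Fin n)] (x : Fin n → ℝ) :
    x ⬝ᵥ (A *ᵥ x) ≤ (⨆ i, hA.eigenvalues i) * (x ⬝ᵥ x) := by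
  set U : Matrix (Fin n) (Fin n) ℝ := ↑(hA.eigenvectorUnitary) with hU
  have hstarU : star U = Uᵀ := by
    ext i j
    simp [Matrix.star_eq_conjTranspose, Matrix.conjTranspose_apply]
  have hUU : U * Uᵀ = 1 := by
    rw [← hstarU]
    exact (Matrix.mem_unitaryGroup_iff).mp hA.eigenvectorUnitary.2
  set y : Fin n → ℝ := Uᵀ *ᵥ x with hy
  have hyy : y ⬝ᵥ y = x ⬝ᵥ x := by
    rw [hy]
    rw [Matrix.dotProduct_mulVec, Matrix.vecMul_transpose, Matrix.mulVec_mulVec, hUU,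
      Matrix.one_mulVec]
  have hxy : x ⬝ᵥ (A *ᵥ x) = ∑ i, hA.eigenvalues i * (y i)^2 := by
    have h0 : x ⬝ᵥ (A *ᵥ x)
        = x ⬝ᵥ ((U * Matrix.diagonal (RCLike.ofReal ∘ hA.eigenvalues) * star U) *ᵥ x) :=
      congrArg (fun M => x ⬝ᵥ (M *ᵥ x)) hA.spectral_theorem
    rw [h0, hstarU]
    rw [← Matrix.mulVec_mulVec, ← Matrix.mulVec_mulVec]
    rw [Matrix.dotProduct_mulVec x U, ← Matrix.mulVec_transpose, ← hy]
    simp only [Matrix.mulVec_diagonal, dotProduct, Function.comp_apply,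
      RCLike.ofReal_real_eq_id, id_eq]
    exact Finset.sum_congr rfl (fun i _ => by ring)
  rw [hxy, ← hyy]
  have hb : BddAbove (Set.range hA.eigenvalues) := Set.Finite.bddAbove (Set.finite_range _)
  calc ∑ i, hA.eigenvalues i * (y i)^2
      ≤ ∑ i, (⨆ j, hA.eigenvalues j) * (y i)^2 :=
        Finset.sum_le_sum (fun i _ =>
          mul_le_mul_of_nonneg_right (le_ciSup hb i) (sq_nonneg _))
    _ = (⨆ j, hA.eigenvalues j) * (y ⬝ᵥ y) := by
        rw [← Finset.mul_sum]
        congr 1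
        simp [dotProduct, pow_two]

lemma distMatrix_K122 {n : ℕ} (hodd : n % 2 = 1) (hn : 0 < n) (u v : Fin n) :
    distMatrix (K122 n) u v =
      (if u = v then 0 else 1) + (if u.val ≠ 0 ∧ v = ksigma u then 1 else 0) := by
  unfold distMatrix
  rw [K122_dist hn]
  rcases eq_or_ne u v with rfl | huv
  · rw [if_pos rfl, if_pos rfl]
    have hne : ¬(u.val ≠ 0 ∧ u = ksigma u) := by
      rintro ⟨h0, hs⟩; exact ksigma_ne hodd h0 hs.symm
    rw [if_neg hne]
    norm_num
  · rw [if_neg huv, if_neg huv]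
    by_cases hu : u.val = 0
    · rw [if_neg (by simp [hu] : ¬(u.val ≠ 0 ∧ v.val ≠ 0 ∧ (u.val + 1) / 2 = (v.val + 1) / 2)),
        if_neg (by simp [hu] : ¬(u.val ≠ 0 ∧ v = ksigma u))]
      norm_num
    · by_cases hs : v = ksigma u
      · have hpair := (pair_iff hodd hu).mpr hs
        rw [if_pos ⟨hu, hpair.1, hpair.2.1⟩, if_pos ⟨hu, hs⟩]
        norm_num
      · rw [if_neg (fun hc : _ ∧ _ ∧ _ => hs ((pair_iff hodd hu).mp ⟨hc.2.1, hc.2.2, huv⟩)),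
          if_neg (fun hc : _ ∧ _ => hs hc.2)]
        norm_num

lemma K122_mulVec {n : ℕ} (hodd : n % 2 = 1) (hn : 0 < n) (x : Fin n → ℝ) (u : Fin n) :
    (distMatrix (K122 n) *ᵥ x) u =
      (∑ v, x v) - x u + (if u.val = 0 then 0 else x (ksigma u)) := by
  show ∑ v, distMatrix (K122 n) u v * x v = _
  rw [Finset.sum_congr rfl (fun v _ => by rw [distMatrix_K122 hodd hn u v, add_mul])]
  rw [Finset.sum_add_distrib]
  have h1 : ∑ v, (if u = v then (0:ℝ) else 1) * x v = (∑ v, x v) - x u := by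
    rw [Finset.sum_congr rfl (fun v _ => show (if u = v then (0:ℝ) else 1) * x v
      = x v - (if u = v then x v else 0) by split_ifs <;> ring)]
    rw [Finset.sum_sub_distrib, Finset.sum_ite_eq]
    simp
  have h2 : ∑ v, (if u.val ≠ 0 ∧ v = ksigma u then (1:ℝ) else 0) * x v
      = (if u.val = 0 then 0 else x (ksigma u)) := by
    by_cases hu : u.val = 0
    · rw [if_pos hu]
      rw [Finset.sum_congr rfl (fun v _ => by rw [if_neg (fun hc => hc.1 hu), zero_mul])]
      simp
    · rw [if_neg hu]
      rw [Finset.sum_congr rfl (fun v _ => show (if u.val ≠ 0 ∧ v = ksigma u then (1:ℝ) else 0) * x v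
        = (if v = ksigma u then x v else 0) by
          by_cases hv : v = ksigma u
          · rw [if_pos ⟨hu, hv⟩, if_pos hv, one_mul]
          · rw [if_neg (fun hc => hv hc.2), if_neg hv, zero_mul])]
      rw [Finset.sum_ite_eq']
      simp
  rw [h1, h2]

/-- reindexing a sum by the involution `ksigma`. -/
lemma sum_ksigma {n : ℕ} (hodd : n % 2 = 1) (g : Fin n → ℝ) :
    ∑ u, g (ksigma u) = ∑ u, g u :=
  Equiv.sum_comp (Function.Involutive.toPerm ksigma (ksigma_invol hodd)) g

lemma sum_if_zero {n : ℕ} (hn : 0 < n) (g : Fin n → ℝ) :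
    ∑ u, (if u.val = 0 then 0 else g u) = (∑ u, g u) - g ⟨0, hn⟩ := by
  rw [Finset.sum_congr rfl (fun u _ => show (if u.val = 0 then (0:ℝ) else g u)
    = g u - (if u = ⟨0, hn⟩ then g u else 0) by
      by_cases h : u.val = 0
      · rw [if_pos h, if_pos (Fin.ext h), sub_self]
      · rw [if_neg h, if_neg (fun hc => h (by rw [hc])), sub_zero])]
  rw [Finset.sum_sub_distrib, Finset.sum_ite_eq']
  simp

lemma sum_if_zero_ksigma {n : ℕ} (hodd : n % 2 = 1) (hn : 0 < n) (g : Fin n → ℝ) :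
    ∑ u, (if u.val = 0 then 0 else g (ksigma u)) = (∑ u, g u) - g ⟨0, hn⟩ := by
  have key := sum_ksigma hodd (fun w => if w.val = 0 then (0:ℝ) else g w)
  have h : ∀ u : Fin n, (if u.val = 0 then (0:ℝ) else g (ksigma u))
      = if (ksigma u).val = 0 then (0:ℝ) else g (ksigma u) := by
    intro u
    by_cases h0 : u.val = 0
    · rw [if_pos h0, if_pos ((ksigma_zero_iff hodd u).mpr h0)]
    · rw [if_neg h0, if_neg (fun hc => h0 ((ksigma_zero_iff hodd u).mp hc))]
  rw [Finset.sum_congr rfl (fun u _ => h u), key, sum_if_zero hn]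

lemma qform_core (m lam s N T t Y x0 : ℝ) (hm : 2 ≤ m) (hlam : lam^2 = m*lam + m)
    (hlam2 : 2 ≤ lam) (hTeq : T = Y/2 - N + x0^2) (hseq : s = x0 + t/2)
    (hY4 : Y ≤ 4*(N - x0^2)) (hY0 : 0 ≤ Y) (hCS : t^2 ≤ m*Y) :
    s*s - N + T ≤ lam * N := by
  have key : 4*m*lam*(lam*N - (s*s - N + T))
      = m*lam*((lam+2)*(4*(N-x0^2) - Y)) + (lam*lam)*(m*Y - t*t)
        + m*((2*lam*x0 - t)^2) := by
    linear_combination (t*t)*hlam - 4*m*lam*hTeq - (4*m*lam*(s + x0 + t/2))*hseq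
  have H1 : 0 ≤ m*lam*((lam+2)*(4*(N-x0^2) - Y)) :=
    mul_nonneg (mul_nonneg (by linarith) (by linarith))
      (mul_nonneg (by linarith) (by linarith))
  have H2 : 0 ≤ (lam*lam)*(m*Y - t*t) :=
    mul_nonneg (mul_nonneg (by linarith) (by linarith)) (by nlinarith)
  have H3 : 0 ≤ m*((2*lam*x0 - t)^2) := mul_nonneg (by linarith) (sq_nonneg _)
  have h0 : 0 ≤ 4*m*lam*(lam*N - (s*s - N + T)) := by rw [key]; linarith
  have hpos : (0:ℝ) < 4*m*lam := by nlinarith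
  by_contra hcon
  push_neg at hcon
  have hneg : 4*m*lam*(lam*N - (s*s - N + T)) < 0 :=
    mul_neg_of_pos_of_neg hpos (by linarith)
  linarith

lemma qform_K122_bound {n : ℕ} (hodd : n % 2 = 1) (h3 : 3 ≤ n) (lam : ℝ)
    (hlam : lam ^ 2 = ((n:ℝ) - 1) * lam + ((n:ℝ) - 1)) (hlam2 : 2 ≤ lam)
    (x : Fin n → ℝ) :
    x ⬝ᵥ (distMatrix (K122 n) *ᵥ x) ≤ lam * (x ⬝ᵥ x) := by
  have hn : 0 < n := by omega
  have hm : (2:ℝ) ≤ (n:ℝ) - 1 := by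
    have : ((3:ℕ):ℝ) ≤ (n:ℝ) := by exact_mod_cast h3
    push_cast at this
    linarith
  -- notation
  let z : Fin n := ⟨0, hn⟩
  let s : ℝ := ∑ v, x v
  let N : ℝ := ∑ v, (x v)^2
  let T : ℝ := ∑ u : Fin n, (if (u : Fin n).val = 0 then (0:ℝ) else x u * x (ksigma u))
  let x0 : ℝ := x z
  let y : Fin n → ℝ := fun u => if u.val = 0 then 0 else x u + x (ksigma u)
  let t : ℝ := ∑ u, y u
  let Y : ℝ := ∑ u, (y u)^2
  have hxx : x ⬝ᵥ x = N := by
    show ∑ v, x v * x v = ∑ v, (x v)^2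
    exact Finset.sum_congr rfl (fun v _ => (pow_two (x v)).symm)
  have hQ : x ⬝ᵥ (distMatrix (K122 n) *ᵥ x) = s * s - N + T := by
    show ∑ u, x u * (distMatrix (K122 n) *ᵥ x) u = _
    have hterm : ∀ u : Fin n, x u * (distMatrix (K122 n) *ᵥ x) u
        = x u * s - (x u)^2
          + (if (u : Fin n).val = 0 then (0:ℝ) else x u * x (ksigma u)) := by
      intro u
      rw [K122_mulVec hodd hn x u]
      show x u * (s - x u + (if (u : Fin n).val = 0 then (0:ℝ) else x (ksigma u))) = _
      by_cases h0 : u.val = 0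
      · simp only [if_pos h0]; ring
      · simp only [if_neg h0]; ring
    rw [Finset.sum_congr rfl (fun u _ => hterm u), Finset.sum_add_distrib,
      Finset.sum_sub_distrib, ← Finset.sum_mul]
  have hself : ∑ u : Fin n, (if (u : Fin n).val = 0 then (0:ℝ) else (x u)^2)
      = N - x0^2 := sum_if_zero hn (fun w => (x w)^2)
  have hother : ∑ u : Fin n, (if (u : Fin n).val = 0 then (0:ℝ) else (x (ksigma u))^2)
      = N - x0^2 := sum_if_zero_ksigma hodd hn (fun w => (x w)^2)
  have hY : Y = 2 * (N - x0^2) + 2 * T := by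
    show ∑ u, (y u)^2 = _
    have hterm : ∀ u : Fin n, (y u)^2
        = ((if (u : Fin n).val = 0 then (0:ℝ) else (x u)^2)
          + (if (u : Fin n).val = 0 then (0:ℝ) else (x (ksigma u))^2))
          + 2 * (if (u : Fin n).val = 0 then (0:ℝ) else x u * x (ksigma u)) := by
      intro u
      show (if u.val = 0 then (0:ℝ) else x u + x (ksigma u))^2 = _
      by_cases h0 : u.val = 0
      · simp only [if_pos h0]; ring
      · simp only [if_neg h0]; ring
    rw [Finset.sum_congr rfl (fun u _ => hterm u), Finset.sum_add_distrib,
      Finset.sum_add_distrib, hself, hother, ← Finset.mul_sum]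
    show (N - x0^2) + (N - x0^2) + 2 * T = _
    ring
  have hts : t = 2 * (s - x0) := by
    show ∑ u, y u = _
    have hterm : ∀ u : Fin n, y u
        = (if (u : Fin n).val = 0 then (0:ℝ) else x u)
          + (if (u : Fin n).val = 0 then (0:ℝ) else x (ksigma u)) := by
      intro u
      show (if u.val = 0 then (0:ℝ) else x u + x (ksigma u)) = _
      by_cases h0 : u.val = 0
      · simp only [if_pos h0]; ring
      · simp only [if_neg h0]
    rw [Finset.sum_congr rfl (fun u _ => hterm u), Finset.sum_add_distrib,
      sum_if_zero hn, sum_if_zero_ksigma hodd hn]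
    show (s - x0) + (s - x0) = _
    ring
  have hTle : T ≤ N - x0^2 := by
    have hle := Finset.sum_le_sum (s := Finset.univ) (f := fun u : Fin n =>
        if (u : Fin n).val = 0 then (0:ℝ) else x u * x (ksigma u))
      (g := fun u : Fin n => (if (u : Fin n).val = 0 then (0:ℝ) else (x u)^2 / 2)
          + (if (u : Fin n).val = 0 then (0:ℝ) else (x (ksigma u))^2 / 2))
      (fun u _ => by
        by_cases h0 : u.val = 0
        · simp only [if_pos h0]; norm_num
        · simp only [if_neg h0]; nlinarith [sq_nonneg (x u - x (ksigma u))])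
    rw [Finset.sum_add_distrib, sum_if_zero hn (fun w => (x w)^2/2),
      sum_if_zero_ksigma hodd hn (fun w => (x w)^2/2), ← Finset.sum_div] at hle
    show T ≤ N - (x z)^2
    calc T ≤ ((∑ u, (x u)^2)/2 - (x z)^2/2) + ((∑ u, (x u)^2)/2 - (x z)^2/2) := hle
    _ = N - (x z)^2 := by show _ = (∑ u, (x u)^2) - (x z)^2; ring
  have hY0 : (0:ℝ) ≤ Y := Finset.sum_nonneg (fun u _ => sq_nonneg _)
  have hyz : y z = 0 := if_pos rfl
  have hCS : t^2 ≤ ((n:ℝ) - 1) * Y := by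
    have hsplit : t = ∑ u ∈ Finset.univ.erase z, y u := by
      show ∑ u, y u = _
      rw [← Finset.add_sum_erase _ _ (Finset.mem_univ z), hyz, zero_add]
    have hYsplit : Y = ∑ u ∈ Finset.univ.erase z, (y u)^2 := by
      show ∑ u, (y u)^2 = _
      rw [← Finset.add_sum_erase _ _ (Finset.mem_univ z), hyz]
      norm_num
    have hcs := Finset.sum_mul_sq_le_sq_mul_sq (Finset.univ.erase z)
      (fun _ => (1:ℝ)) y
    simp only [one_pow, one_mul] at hcs
    rw [Finset.sum_const, Finset.card_erase_of_mem (Finset.mem_univ z),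
      Finset.card_univ, Fintype.card_fin, nsmul_eq_mul, mul_one] at hcs
    have hcast : ((n - 1 : ℕ) : ℝ) = (n:ℝ) - 1 := by
      have h1 : (1:ℕ) ≤ n := by omega
      push_cast [h1]
      ring
    rw [hsplit, hYsplit]
    calc (∑ u ∈ Finset.univ.erase z, y u)^2
        ≤ ((n-1 : ℕ) : ℝ) * ∑ u ∈ Finset.univ.erase z, (y u)^2 := hcs
      _ = ((n:ℝ) - 1) * ∑ u ∈ Finset.univ.erase z, (y u)^2 := by rw [hcast]
  rw [hQ, hxx]
  exact qform_core ((n:ℝ)-1) lam s N T t Y x0 hm hlam hlam2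
    (by linarith) (by linarith) (by linarith) hY0 hCS

lemma K122_eigenvector {n : ℕ} (hodd : n % 2 = 1) (h3 : 3 ≤ n) (lam : ℝ)
    (hlam : lam ^ 2 = ((n:ℝ) - 1) * lam + ((n:ℝ) - 1)) :
    distMatrix (K122 n) *ᵥ (fun u : Fin n => if u.val = 0 then lam - ((n:ℝ)-1) else 1)
      = lam • (fun u : Fin n => if u.val = 0 then lam - ((n:ℝ)-1) else 1) := by
  have hn : 0 < n := by omega
  set v : Fin n → ℝ := fun u => if u.val = 0 then lam - ((n:ℝ)-1) else 1 with hv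
  have hsum : ∑ u, v u = lam - ((n:ℝ)-1) + ((n:ℝ) - 1) := by
    have := sum_if_zero hn (fun _ : Fin n => (1:ℝ))
    have hsplit : ∑ u, v u = (lam - ((n:ℝ)-1)) - 1 + ∑ u : Fin n, (1:ℝ) := by
      have hterm : ∀ u : Fin n, v u = (if u.val = 0 then (lam - ((n:ℝ)-1)) - 1 else 0) + 1 := by
        intro u
        show (if u.val = 0 then lam - ((n:ℝ)-1) else 1) = _
        by_cases h0 : u.val = 0 <;> simp [h0]
      rw [Finset.sum_congr rfl (fun u _ => hterm u), Finset.sum_add_distrib]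
      congr 1
      have : ∀ u : Fin n, (if (u:Fin n).val = 0 then (lam - ((n:ℝ)-1)) - 1 else (0:ℝ))
          = (if u = ⟨0, hn⟩ then (lam - ((n:ℝ)-1)) - 1 else 0) := by
        intro u
        by_cases h0 : u.val = 0
        · rw [if_pos h0, if_pos (Fin.ext h0)]
        · rw [if_neg h0, if_neg (fun hc => h0 (by rw [hc]))]
      rw [Finset.sum_congr rfl (fun u _ => this u), Finset.sum_ite_eq']
      simp
    rw [hsplit]
    rw [Finset.sum_const, Finset.card_univ, Fintype.card_fin, nsmul_eq_mul, mul_one]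
    ring
  funext u
  show (distMatrix (K122 n) *ᵥ v) u = lam * v u
  rw [K122_mulVec hodd hn v u, hsum]
  by_cases h0 : u.val = 0
  · rw [if_pos h0]
    show _ - v u + 0 = _
    have : v u = lam - ((n:ℝ)-1) := by rw [hv]; simp [h0]
    rw [this]
    show lam - ((n:ℝ)-1) + ((n:ℝ)-1) - (lam - ((n:ℝ)-1)) + 0 = lam * (lam - ((n:ℝ)-1))
    nlinarith [hlam]
  · rw [if_neg h0]
    have h1 : v u = 1 := by rw [hv]; simp [h0]
    have h2 : v (ksigma u) = 1 := by
      rw [hv]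
      simp only []
      rw [if_neg (fun hc => h0 ((ksigma_zero_iff hodd u).mp hc))]
    rw [h1, h2]
    ring

lemma lambda1_K122 {n : ℕ} (hodd : n % 2 = 1) (h3 : 3 ≤ n) (lam : ℝ)
    (hlam : lam ^ 2 = ((n:ℝ) - 1) * lam + ((n:ℝ) - 1)) (hlam2 : 2 ≤ lam) :
    lambda1 (K122 n) = lam := by
  have hn : 0 < n := by omega
  have : Nonempty (Fin n) := ⟨⟨0, hn⟩⟩
  apply le_antisymm
  · exact ciSup_le (fun i => eig_le_of_qform _ (distMatrix_isHermitian (K122 n)) lam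
      (qform_K122_bound hodd h3 lam hlam hlam2) i)
  · set v : Fin n → ℝ := fun u => if u.val = 0 then lam - ((n:ℝ)-1) else 1 with hv
    have hev := K122_eigenvector hodd h3 lam hlam
    have hq := qform_le_sup (distMatrix (K122 n)) (distMatrix_isHermitian (K122 n)) v
    rw [hev] at hq
    have hdot : v ⬝ᵥ (lam • v) = lam * (v ⬝ᵥ v) := by
      rw [dotProduct_smul]
      rfl
    rw [hdot] at hq
    have hvv : (1:ℝ) ≤ v ⬝ᵥ v := by
      have hmem : (⟨1, by omega⟩ : Fin n) ∈ Finset.univ := Finset.mem_univ _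
      have hone : v ⟨1, by omega⟩ * v ⟨1, by omega⟩ = 1 := by
        rw [hv]
        norm_num
      calc (1:ℝ) = v ⟨1, by omega⟩ * v ⟨1, by omega⟩ := hone.symm
        _ ≤ ∑ u, v u * v u := Finset.single_le_sum
            (fun u _ => mul_self_nonneg (v u)) hmem
        _ = v ⬝ᵥ v := rfl
    have hpos : (0:ℝ) < v ⬝ᵥ v := by linarith
    have hq' : lam * (v ⬝ᵥ v) ≤ lambda1 (K122 n) * (v ⬝ᵥ v) := hq
    exact le_of_mul_le_mul_right hq' hpos

theorem stmt1 (r : ℕ) (hr : 2 ≤ r) (n : ℕ) (hn : n = 2 * r - 1) :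
    Dmax (K122 n) = n ∧
    (Dmax (K122 n) : ℝ) - lambda1 (K122 n) =
      ((n : ℝ) + 1 - Real.sqrt (((n : ℝ) - 1) * ((n : ℝ) + 3))) / 2 := by
  have h3 : 3 ≤ n := by omega
  have hodd : n % 2 = 1 := by omega
  have hn3 : (3:ℝ) ≤ (n:ℝ) := by exact_mod_cast h3
  have hsqnn : (0:ℝ) ≤ ((n:ℝ)-1)*((n:ℝ)+3) := by nlinarith
  set sq := Real.sqrt (((n:ℝ)-1)*((n:ℝ)+3)) with hsqdef
  have hsq2 : sq^2 = ((n:ℝ)-1)*((n:ℝ)+3) := Real.sq_sqrt hsqnn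
  have hsq0 : (0:ℝ) ≤ sq := Real.sqrt_nonneg _
  set lam := (((n:ℝ)-1) + sq)/2 with hlamdef
  have hlam : lam^2 = ((n:ℝ)-1)*lam + ((n:ℝ)-1) := by
    rw [hlamdef]
    linear_combination hsq2/4
  have hlam2 : (2:ℝ) ≤ lam := by
    have h12 : (2:ℝ) ≤ sq := by nlinarith
    rw [hlamdef]
    linarith
  refine ⟨Dmax_K122 hodd h3, ?_⟩
  rw [Dmax_K122 hodd h3, lambda1_K122 hodd h3 lam hlam hlam2, hlamdef]
  ring
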